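/- Let T > 0, let (Ω, 𝓕, P) be a probability space with a filtration (𝓕_s)_{s ∈ [0,T]}, and fix u ∈ [0,T]. Let f, f' : [0,T] × Ω → ℝ be progressively measurable with E[∫ᵤᵀ (|f(s)| + |f'(s)|) ds] < ∞, let L be an adapted process with continuous paths satisfying E[sup_{v ∈ [0,T]} |L(v)|] < ∞, and let ξ, ξ' be integrable 𝓕_T-measurable random variables. For a stopping time τ ∈ S_u define A_τ := ∫ᵤ^τ f(s) ds + L(τ) 1_{τ<T} + ξ 1_{τ=T} and A'_τ := ∫ᵤ^τ f'(s) ds + L(τ) 1_{τ<T} + ξ' 1_{τ=T}. If Y is an essential supremum of the family {E[A_τ | 𝓕_u] : τ ∈ S_u} and Y' is an essential supremum of the family {E[A'_τ | 𝓕_u] : τ ∈ S_u}, then |Y − Y'| ≤ E[ ∫ᵤᵀ |f(s) − f'(s)| ds + |ξ − ξ'| | 𝓕_u ] almost surely. -/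

import Mathlib

open MeasureTheory Set
open scoped ENNReal

/-- The stopped reward `∫ᵤ^τ f(s) ds + L(τ) 1_{τ<T} + ξ 1_{τ=T}`. -/
noncomputable def reward {Ω : Type*} (f : ℝ → Ω → ℝ) (L : ℝ → Ω → ℝ) (ξ : Ω → ℝ)
    (u T : ℝ) (τ : Ω → ℝ) (ω : Ω) : ℝ :=
  (∫ s in u..(τ ω), f s ω) + (if τ ω < T then L (τ ω) ω else 0) +
    (if τ ω = T then ξ ω else 0)

/-- `Y` is an essential supremum of the family `X i`, `i : ι`, of integrable random
variables: `Y` is integrable, dominates every `X i` a.s., and is a.s. below every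
random variable dominating the whole family a.s. -/
def IsEssSupFamily {Ω : Type*} {m0 : MeasurableSpace Ω} (P : Measure Ω)
    {ι : Sort*} (X : ι → Ω → ℝ) (Y : Ω → ℝ) : Prop :=
  Integrable Y P ∧ (∀ i, ∀ᵐ ω ∂P, X i ω ≤ Y ω) ∧
    ∀ Z : Ω → ℝ, AEStronglyMeasurable Z P →
      (∀ i, ∀ᵐ ω ∂P, X i ω ≤ Z ω) → ∀ᵐ ω ∂P, Y ω ≤ Z ω

/-- The set `S_u` of stopping times of the filtration `ℱ` with values in `[u,T]` a.s. -/
def StoppingTimesIn {Ω : Type*} {m0 : MeasurableSpace Ω} (ℱ : Filtration ℝ m0)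
    (P : Measure Ω) (u T : ℝ) : Set (Ω → ℝ) :=
  {τ | IsStoppingTime ℱ (fun ω => (τ ω : WithTop ℝ)) ∧ ∀ᵐ ω ∂P, τ ω ∈ Icc u T}

namespace VPSAux

variable {Ω : Type*} {m0 : MeasurableSpace Ω}

lemma ennnorm_abs (x : ℝ) : (‖x‖₊ : ℝ≥0∞) = ENNReal.ofReal |x| := by
  rw [← Real.enorm_eq_ofReal_abs]; rfl

lemma integrable_of_bound {P : Measure Ω} {g : Ω → ℝ} (hg : AEStronglyMeasurable g P)
    {B : Ω → ℝ≥0∞} (hB : ∫⁻ ω, B ω ∂P < ⊤) (h : ∀ᵐ ω ∂P, ENNReal.ofReal |g ω| ≤ B ω) :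
    Integrable g P := by
  refine ⟨hg, ?_⟩
  have : ∫⁻ ω, (‖g ω‖₊ : ℝ≥0∞) ∂P ≤ ∫⁻ ω, B ω ∂P :=
    lintegral_mono_ae (h.mono fun ω hω => by rw [ennnorm_abs]; exact hω)
  exact lt_of_le_of_lt this hB

lemma sm_min (ℱ : Filtration ℝ m0) (T : ℝ) {f : ℝ → Ω → ℝ} (hf : ProgMeasurable ℱ f) :
    StronglyMeasurable fun p : ℝ × Ω => f (min p.1 T) p.2 := by
  have h := hf T
  have hφ : @Measurable (ℝ × Ω) (Set.Iic T × Ω) Prod.instMeasurableSpace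
      (Subtype.instMeasurableSpace.prod (ℱ T))
      (fun p => (⟨min p.1 T, mem_Iic.2 (min_le_right _ _)⟩, p.2)) := by
    refine @Measurable.prodMk _ _ _ _ Subtype.instMeasurableSpace (ℱ T) _ _ ?_ ?_
    · exact (measurable_fst.min measurable_const).subtype_mk
    · exact measurable_snd.mono le_rfl (ℱ.le T)
  exact h.comp_measurable hφ

lemma sm_param_integral {F : ℝ × Ω → ℝ} (hF : StronglyMeasurable F) (u T : ℝ)
    {τ : Ω → ℝ} (hτ : Measurable τ) :
    StronglyMeasurable fun ω => ∫ s in Ioc u (min (τ ω) T), F (s, ω) := by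
  have hset : MeasurableSet {q : Ω × ℝ | q.2 ∈ Ioc u (min (τ q.1) T)} := by
    have : {q : Ω × ℝ | q.2 ∈ Ioc u (min (τ q.1) T)}
        = {q : Ω × ℝ | u < q.2} ∩ {q : Ω × ℝ | q.2 ≤ min (τ q.1) T} := by
      ext q; simp only [mem_Ioc, mem_setOf_eq, mem_inter_iff]
    rw [this]
    exact (measurableSet_lt measurable_const measurable_snd).inter
      (measurableSet_le measurable_snd ((hτ.comp measurable_fst).min measurable_const))
  have hG : StronglyMeasurable fun q : Ω × ℝ =>
      ({q : Ω × ℝ | q.2 ∈ Ioc u (min (τ q.1) T)}).indicator (fun q => F (q.2, q.1)) q :=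
    (hF.comp_measurable (measurable_snd.prodMk measurable_fst)).indicator hset
  have key : (fun ω => ∫ s in Ioc u (min (τ ω) T), F (s, ω)) = fun ω =>
      ∫ s, ({q : Ω × ℝ | q.2 ∈ Ioc u (min (τ q.1) T)}).indicator (fun q => F (q.2, q.1)) (ω, s) := by
    funext ω
    rw [← integral_indicator measurableSet_Ioc]
    simp only [Set.indicator_apply, mem_setOf_eq]
  rw [key]
  exact hG.integral_prod_right'

lemma meas_param_lintegral {G : ℝ × Ω → ℝ≥0∞} (hG : Measurable G) (u T : ℝ) :
    Measurable fun ω => ∫⁻ s in Icc u T, G (s, ω) :=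
  Measurable.lintegral_prod_right' (hG.comp (measurable_snd.prodMk measurable_fst))

lemma sm_clampL (ℱ : Filtration ℝ m0) {T : ℝ} (hT0 : 0 ≤ T) {L : ℝ → Ω → ℝ}
    (hL : StronglyAdapted ℱ L) (hLc : ∀ ω, ContinuousOn (fun v => L v ω) (Icc 0 T)) :
    StronglyMeasurable fun p : ℝ × Ω => L (max (min p.1 T) 0) p.2 := by
  have := stronglyMeasurable_uncurry_of_continuous_of_stronglyMeasurable
    (u := fun t (ω : Ω) => L (max (min t T) 0) ω)
    (fun ω => (hLc ω).comp_continuous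
      ((continuous_id.min continuous_const).max continuous_const)
      (fun t => ⟨le_max_right _ _, max_le (min_le_right _ _) hT0⟩))
    (fun t => ((hL _).mono (ℱ.le _)))
  exact this

lemma stopping_measurable {ℱ : Filtration ℝ m0} {τ : Ω → ℝ} (hτ : IsStoppingTime ℱ (fun ω => (τ ω : WithTop ℝ))) :
    Measurable τ :=
  measurable_of_Iic fun x => by
    have h : {ω | ((τ ω : ℝ) : WithTop ℝ) ≤ (x : WithTop ℝ)} = τ ⁻¹' Iic x := by ext; simp
    rw [← h]; exact ℱ.le x _ (hτ x)

lemma integrableOn_of_lt_top {u T : ℝ} {f : ℝ → Ω → ℝ}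
    (hF : StronglyMeasurable fun p : ℝ × Ω => f (min p.1 T) p.2) {ω : Ω}
    (hfin : (∫⁻ s in Icc u T, ENNReal.ofReal |f (min s T) ω|) < ⊤) :
    IntegrableOn (fun s => f s ω) (Ioc u T) volume := by
  have hsm : StronglyMeasurable fun s => f (min s T) ω :=
    hF.comp_measurable (measurable_id.prodMk measurable_const)
  have hFI : IntegrableOn (fun s => f (min s T) ω) (Ioc u T) volume := by
    refine ⟨hsm.aestronglyMeasurable.restrict, ?_⟩
    have : ∫⁻ s in Ioc u T, (‖f (min s T) ω‖₊ : ℝ≥0∞)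
        ≤ ∫⁻ s in Icc u T, ENNReal.ofReal |f (min s T) ω| := by
      refine le_trans (le_of_eq (lintegral_congr fun s => ennnorm_abs _)) ?_
      exact lintegral_mono_set Ioc_subset_Icc_self
    exact lt_of_le_of_lt this hfin
  refine hFI.congr ?_
  filter_upwards [ae_restrict_mem measurableSet_Ioc] with s hs
  rw [min_eq_left hs.2]

/-- Integrability of the reward of a stopping time in `S_u`. -/
lemma reward_integrable (P : Measure Ω) (ℱ : Filtration ℝ m0)
    {u T : ℝ} (hu0 : 0 ≤ u) (huT : u ≤ T)
    {f : ℝ → Ω → ℝ} (hf : ProgMeasurable ℱ f)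
    {B : Ω → ℝ≥0∞} (hBint : ∫⁻ ω, B ω ∂P < ⊤)
    (hB : ∀ᵐ ω ∂P, (∫⁻ s in Icc u T, ENNReal.ofReal |f (min s T) ω|) ≤ B ω)
    {L : ℝ → Ω → ℝ} (hL : StronglyAdapted ℱ L)
    (hLc : ∀ ω, ContinuousOn (fun v => L v ω) (Icc 0 T))
    (hLint : ∫⁻ ω, (⨆ v ∈ Icc (0:ℝ) T, ENNReal.ofReal |L v ω|) ∂P < ⊤)
    {ξ : Ω → ℝ} (hξ : Integrable ξ P)
    {τ : Ω → ℝ} (hτ : IsStoppingTime ℱ (fun ω => (τ ω : WithTop ℝ))) (hτm : ∀ᵐ ω ∂P, τ ω ∈ Icc u T) :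
    Integrable (reward f L ξ u T τ) P := by
  have hτmeas : Measurable τ := stopping_measurable hτ
  set F : ℝ × Ω → ℝ := fun p => f (min p.1 T) p.2 with hFdef
  have hF : StronglyMeasurable F := sm_min ℱ T hf
  -- first component
  have h1 : Integrable (fun ω => ∫ s in u..(τ ω), f s ω) P := by
    refine integrable_of_bound ?_ hBint ?_
    · refine (AEStronglyMeasurable.congr
        ((sm_param_integral hF u T hτmeas).aestronglyMeasurable) ?_)
      filter_upwards [hτm] with ω hω
      rw [min_eq_left hω.2, intervalIntegral.integral_of_le hω.1]
      refine setIntegral_congr_fun measurableSet_Ioc fun s hs => ?_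
      simp only [hFdef, min_eq_left (hs.2.trans hω.2)]
    · filter_upwards [hτm, hB] with ω hω hBω
      rw [intervalIntegral.integral_of_le hω.1]
      have e1 : (∫ s in Ioc u (τ ω), f s ω) = ∫ s in Ioc u (τ ω), F (s, ω) := by
        refine setIntegral_congr_fun measurableSet_Ioc fun s hs => ?_
        simp only [hFdef, min_eq_left (hs.2.trans hω.2)]
      rw [e1, ← Real.enorm_eq_ofReal_abs]
      refine le_trans (enorm_integral_le_lintegral_enorm _) (le_trans ?_ hBω)
      have hsub : Ioc u (τ ω) ⊆ Icc u T := Ioc_subset_Icc_self.trans (Icc_subset_Icc_right hω.2)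
      refine le_trans (lintegral_mono_set hsub) (le_of_eq ?_)
      refine lintegral_congr fun s => ?_
      rw [Real.enorm_eq_ofReal_abs]
  -- second component
  have h2 : Integrable (fun ω => if τ ω < T then L (τ ω) ω else 0) P := by
    refine integrable_of_bound ?_ hLint ?_
    · have hsm : StronglyMeasurable fun ω =>
          ({ω : Ω | τ ω < T}).indicator (fun ω => L (max (min (τ ω) T) 0) ω) ω :=
        ((sm_clampL ℱ (hu0.trans huT) hL hLc).comp_measurable
          (hτmeas.prodMk measurable_id)).indicator (measurableSet_lt hτmeas measurable_const)
      refine hsm.aestronglyMeasurable.congr ?_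
      filter_upwards [hτm] with ω hω
      rw [Set.indicator_apply]
      by_cases h : τ ω < T
      · simp only [mem_setOf_eq, h, if_true, min_eq_left hω.2, max_eq_left (hu0.trans hω.1)]
      · simp only [mem_setOf_eq, h, if_false]
    · filter_upwards [hτm] with ω hω
      by_cases h : τ ω < T
      · rw [if_pos h]
        exact le_biSup (fun v => ENNReal.ofReal |L v ω|) ⟨hu0.trans hω.1, hω.2⟩
      · rw [if_neg h]; simp
  -- third component
  have h3 : Integrable (fun ω => if τ ω = T then ξ ω else 0) P := by
    have hfi : ∫⁻ ω, ENNReal.ofReal |ξ ω| ∂P < ⊤ := by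
      have := hξ.2
      rw [HasFiniteIntegral] at this
      refine lt_of_le_of_lt (le_of_eq ?_) this
      exact lintegral_congr fun ω => (ennnorm_abs _).symm
    refine integrable_of_bound ?_ hfi ?_
    · have : (fun ω => if τ ω = T then ξ ω else 0)
          = fun ω => ({ω : Ω | τ ω = T}).indicator ξ ω := by
        funext ω
        rw [Set.indicator_apply]
        by_cases h : τ ω = T <;> simp [h]
      rw [this]
      exact hξ.1.indicator (hτmeas (measurableSet_singleton T))
    · refine ae_of_all _ fun ω => ?_
      by_cases h : τ ω = T
      · rw [if_pos h]
      · rw [if_neg h]; simp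
  exact (h1.add h2).add h3

end VPSAux

open VPSAux

/-- Stability of the value process (essential supremum of the
conditional stopped rewards) with respect to the data `(f, ξ)`:
`|Y - Y'| ≤ E[∫ᵤᵀ |f - f'| ds + |ξ - ξ'| | 𝓕ᵤ]` a.s. -/
theorem value_process_stability
    {Ω : Type*} {m0 : MeasurableSpace Ω} (P : Measure Ω) [IsProbabilityMeasure P]
    (ℱ : Filtration ℝ m0) (T : ℝ) (hT : 0 < T) (u : ℝ) (hu : u ∈ Icc 0 T)
    (f f' : ℝ → Ω → ℝ) (hf : ProgMeasurable ℱ f) (hf' : ProgMeasurable ℱ f')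
    (hffint : ∫⁻ ω, (∫⁻ s in Icc u T, ENNReal.ofReal (|f s ω| + |f' s ω|)) ∂P < ⊤)
    (L : ℝ → Ω → ℝ) (hL : StronglyAdapted ℱ L)
    (hLc : ∀ ω, ContinuousOn (fun v => L v ω) (Icc 0 T))
    (hLint : ∫⁻ ω, (⨆ v ∈ Icc (0 : ℝ) T, ENNReal.ofReal |L v ω|) ∂P < ⊤)
    (ξ ξ' : Ω → ℝ) (hξ : Integrable ξ P) (hξm : Measurable[ℱ T] ξ)
    (hξ' : Integrable ξ' P) (hξ'm : Measurable[ℱ T] ξ')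
    (Y Y' : Ω → ℝ)
    (hY : IsEssSupFamily P
      (fun τ : StoppingTimesIn ℱ P u T => P[reward f L ξ u T ↑τ | ℱ u]) Y)
    (hY' : IsEssSupFamily P
      (fun τ : StoppingTimesIn ℱ P u T => P[reward f' L ξ' u T ↑τ | ℱ u]) Y') :
    ∀ᵐ ω ∂P, |Y ω - Y' ω| ≤
      (P[fun ω' => (∫ s in u..T, |f s ω' - f' s ω'|) + |ξ ω' - ξ' ω'| | ℱ u]) ω := by
  obtain ⟨hu0, huT⟩ := hu
  set D : Ω → ℝ := fun ω' => (∫ s in u..T, |f s ω' - f' s ω'|) + |ξ ω' - ξ' ω'| with hDdef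
  set F : ℝ × Ω → ℝ := fun p => f (min p.1 T) p.2 with hFdef
  set F' : ℝ × Ω → ℝ := fun p => f' (min p.1 T) p.2 with hF'def
  have hF : StronglyMeasurable F := sm_min ℱ T hf
  have hF' : StronglyMeasurable F' := sm_min ℱ T hf'
  set B : Ω → ℝ≥0∞ := fun ω => ∫⁻ s in Icc u T, ENNReal.ofReal (|F (s, ω)| + |F' (s, ω)|)
    with hBdef
  have hBmeas : Measurable B := by
    rw [hBdef]
    exact meas_param_lintegral (G := fun p => ENNReal.ofReal (|F p| + |F' p|))
      ((hF.measurable.abs.add hF'.measurable.abs).ennreal_ofReal) u T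
  have hBeq : ∀ ω, B ω = ∫⁻ s in Icc u T, ENNReal.ofReal (|f s ω| + |f' s ω|) := by
    intro ω
    refine setLIntegral_congr_fun measurableSet_Icc (fun s hs => ?_)
    show ENNReal.ofReal (|f (min s T) ω| + |f' (min s T) ω|) = _
    rw [min_eq_left hs.2]
  have hBint : ∫⁻ ω, B ω ∂P < ⊤ := by
    refine lt_of_le_of_lt (le_of_eq (lintegral_congr fun ω => hBeq ω)) hffint
  have hBfin : ∀ᵐ ω ∂P, B ω < ⊤ := ae_lt_top hBmeas hBint.ne
  -- a.e. interval integrability of f and f' on (u, T]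
  have hIff : ∀ᵐ ω ∂P, IntegrableOn (fun s => f s ω) (Ioc u T) volume ∧
      IntegrableOn (fun s => f' s ω) (Ioc u T) volume := by
    filter_upwards [hBfin] with ω hω
    constructor
    · refine integrableOn_of_lt_top hF (lt_of_le_of_lt ?_ hω)
      refine lintegral_mono fun s => ENNReal.ofReal_le_ofReal ?_
      exact le_add_of_nonneg_right (abs_nonneg _)
    · refine integrableOn_of_lt_top hF' (lt_of_le_of_lt ?_ hω)
      refine lintegral_mono fun s => ENNReal.ofReal_le_ofReal ?_
      exact le_add_of_nonneg_left (abs_nonneg _)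
  -- pointwise comparison of rewards
  have hpt : ∀ᵐ ω ∂P, ∀ τ : Ω → ℝ, τ ω ∈ Icc u T →
      reward f L ξ u T τ ω ≤ reward f' L ξ' u T τ ω + D ω ∧
      reward f' L ξ' u T τ ω ≤ reward f L ξ u T τ ω + D ω := by
    filter_upwards [hIff] with ω hω
    intro τ hτω
    obtain ⟨h1, h2⟩ := hω
    have hfi : IntervalIntegrable (fun s => f s ω) volume u (τ ω) :=
      (intervalIntegrable_iff_integrableOn_Ioc_of_le hτω.1).2
        (h1.mono_set (Ioc_subset_Ioc_right hτω.2))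
    have hfi' : IntervalIntegrable (fun s => f' s ω) volume u (τ ω) :=
      (intervalIntegrable_iff_integrableOn_Ioc_of_le hτω.1).2
        (h2.mono_set (Ioc_subset_Ioc_right hτω.2))
    have habsI : IntegrableOn (fun s => |f s ω - f' s ω|) (Ioc u T) volume := (h1.sub h2).abs
    have habsT : IntervalIntegrable (fun s => |f s ω - f' s ω|) volume u T :=
      (intervalIntegrable_iff_integrableOn_Ioc_of_le (hτω.1.trans hτω.2)).2 habsI
    have habs : IntervalIntegrable (fun s => |f s ω - f' s ω|) volume u (τ ω) :=
      (intervalIntegrable_iff_integrableOn_Ioc_of_le hτω.1).2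
        (habsI.mono_set (Ioc_subset_Ioc_right hτω.2))
    have key1 : (∫ s in u..(τ ω), f s ω) - (∫ s in u..(τ ω), f' s ω)
        ≤ ∫ s in u..T, |f s ω - f' s ω| := by
      rw [← intervalIntegral.integral_sub hfi hfi']
      refine le_trans (intervalIntegral.integral_mono_on hτω.1 (hfi.sub hfi') habs
        fun s _ => le_abs_self _) ?_
      exact intervalIntegral.integral_mono_interval le_rfl hτω.1 hτω.2
        (ae_of_all _ fun s => abs_nonneg _) habsT
    have key1' : (∫ s in u..(τ ω), f' s ω) - (∫ s in u..(τ ω), f s ω)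
        ≤ ∫ s in u..T, |f s ω - f' s ω| := by
      rw [← intervalIntegral.integral_sub hfi' hfi]
      refine le_trans (intervalIntegral.integral_mono_on hτω.1 (hfi'.sub hfi) habs
        fun s _ => ?_) ?_
      · rw [show f' s ω - f s ω = -(f s ω - f' s ω) by ring]
        exact neg_le_abs _
      exact intervalIntegral.integral_mono_interval le_rfl hτω.1 hτω.2
        (ae_of_all _ fun s => abs_nonneg _) habsT
    have key2 : (if τ ω = T then ξ ω else 0) - (if τ ω = T then ξ' ω else 0)
        ≤ |ξ ω - ξ' ω| := by
      by_cases h : τ ω = T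
      · simp only [h, if_true]; exact le_abs_self _
      · rw [if_neg h, if_neg h, sub_zero]
        exact abs_nonneg _
    have key2' : (if τ ω = T then ξ' ω else 0) - (if τ ω = T then ξ ω else 0)
        ≤ |ξ ω - ξ' ω| := by
      by_cases h : τ ω = T
      · simp only [h, if_true]; rw [abs_sub_comm]; exact le_abs_self _
      · rw [if_neg h, if_neg h, sub_zero]
        exact abs_nonneg _
    simp only [reward, hDdef]
    constructor <;> linarith
  -- integrability of D
  have hD : Integrable D P := by
    have hpart1 : Integrable (fun ω => ∫ s in u..T, |f s ω - f' s ω|) P := by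
      have heq : (fun ω => ∫ s in u..T, |f s ω - f' s ω|)
          = fun ω => ∫ s in Ioc u T, |F (s, ω) - F' (s, ω)| := by
        funext ω
        rw [intervalIntegral.integral_of_le huT]
        refine setIntegral_congr_fun measurableSet_Ioc fun s hs => ?_
        simp only [hFdef, hF'def, min_eq_left hs.2]
      refine integrable_of_bound ?_ hBint ?_
      · rw [heq]
        have hsm : StronglyMeasurable fun p : ℝ × Ω => |F p - F' p| := (hF.sub hF').norm
        have := sm_param_integral (F := fun p => |F p - F' p|) hsm u T
          (measurable_const : Measurable fun _ : Ω => T)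
        simp only [min_self] at this
        exact this.aestronglyMeasurable
      · refine ae_of_all _ fun ω => ?_
        rw [congrFun heq ω, ← Real.enorm_eq_ofReal_abs]
        refine le_trans (enorm_integral_le_lintegral_enorm _) ?_
        refine le_trans (lintegral_mono_set Ioc_subset_Icc_self) ?_
        refine lintegral_mono fun s => le_of_eq (ennnorm_abs _) |>.trans ?_
        rw [abs_abs]
        exact ENNReal.ofReal_le_ofReal (abs_sub _ _)
    exact hpart1.add ((hξ.sub hξ').abs)
  -- integrability of the rewards
  have hBineq : ∀ᵐ ω ∂P, (∫⁻ s in Icc u T, ENNReal.ofReal |f (min s T) ω|) ≤ B ω := by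
    refine ae_of_all _ fun ω => lintegral_mono fun s => ENNReal.ofReal_le_ofReal ?_
    exact le_add_of_nonneg_right (abs_nonneg _)
  have hBineq' : ∀ᵐ ω ∂P, (∫⁻ s in Icc u T, ENNReal.ofReal |f' (min s T) ω|) ≤ B ω := by
    refine ae_of_all _ fun ω => lintegral_mono fun s => ENNReal.ofReal_le_ofReal ?_
    exact le_add_of_nonneg_left (abs_nonneg _)
  have hA : ∀ τ : StoppingTimesIn ℱ P u T, Integrable (reward f L ξ u T ↑τ) P := fun τ =>
    reward_integrable P ℱ hu0 huT hf hBint hBineq hL hLc hLint hξ τ.2.1 τ.2.2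
  have hA' : ∀ τ : StoppingTimesIn ℱ P u T, Integrable (reward f' L ξ' u T ↑τ) P := fun τ =>
    reward_integrable P ℱ hu0 huT hf' hBint hBineq' hL hLc hLint hξ' τ.2.1 τ.2.2
  -- key conditional expectation bounds
  have hkey : ∀ τ : StoppingTimesIn ℱ P u T,
      (P[reward f L ξ u T ↑τ | ℱ u]) ≤ᵐ[P] fun ω => Y' ω + (P[D | ℱ u]) ω := by
    intro τ
    have hle : reward f L ξ u T ↑τ ≤ᵐ[P] reward f' L ξ' u T ↑τ + D := by
      filter_upwards [hpt, τ.2.2] with ω hω hτω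
      exact (hω ↑τ hτω).1
    have h1 := condExp_mono (μ := P) (m := ℱ u) (hA τ) ((hA' τ).add hD) hle
    have h2 := condExp_add (μ := P) (m := ℱ u) (hA' τ) hD
    have h3 := hY'.2.1 τ
    filter_upwards [h1, h2.symm.le, h2.le, h3] with ω e1 e2 e2' e3
    have : (P[reward f' L ξ' u T ↑τ + D | ℱ u]) ω
        = (P[reward f' L ξ' u T ↑τ | ℱ u]) ω + (P[D | ℱ u]) ω := le_antisymm e2' e2
    calc (P[reward f L ξ u T ↑τ | ℱ u]) ω ≤ (P[reward f' L ξ' u T ↑τ + D | ℱ u]) ω := e1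
      _ = (P[reward f' L ξ' u T ↑τ | ℱ u]) ω + (P[D | ℱ u]) ω := this
      _ ≤ Y' ω + (P[D | ℱ u]) ω := by exact add_le_add_left e3 _
  have hkey' : ∀ τ : StoppingTimesIn ℱ P u T,
      (P[reward f' L ξ' u T ↑τ | ℱ u]) ≤ᵐ[P] fun ω => Y ω + (P[D | ℱ u]) ω := by
    intro τ
    have hle : reward f' L ξ' u T ↑τ ≤ᵐ[P] reward f L ξ u T ↑τ + D := by
      filter_upwards [hpt, τ.2.2] with ω hω hτω
      exact (hω ↑τ hτω).2
    have h1 := condExp_mono (μ := P) (m := ℱ u) (hA' τ) ((hA τ).add hD) hle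
    have h2 := condExp_add (μ := P) (m := ℱ u) (hA τ) hD
    have h3 := hY.2.1 τ
    filter_upwards [h1, h2.symm.le, h2.le, h3] with ω e1 e2 e2' e3
    have : (P[reward f L ξ u T ↑τ + D | ℱ u]) ω
        = (P[reward f L ξ u T ↑τ | ℱ u]) ω + (P[D | ℱ u]) ω := le_antisymm e2' e2
    calc (P[reward f' L ξ' u T ↑τ | ℱ u]) ω ≤ (P[reward f L ξ u T ↑τ + D | ℱ u]) ω := e1
      _ = (P[reward f L ξ u T ↑τ | ℱ u]) ω + (P[D | ℱ u]) ω := this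
      _ ≤ Y ω + (P[D | ℱ u]) ω := by exact add_le_add_left e3 _
  have hEm : AEStronglyMeasurable (fun ω => (P[D | ℱ u]) ω) P :=
    (stronglyMeasurable_condExp.mono (ℱ.le u)).aestronglyMeasurable
  have hYle : ∀ᵐ ω ∂P, Y ω ≤ Y' ω + (P[D | ℱ u]) ω :=
    hY.2.2 _ (hY'.1.aestronglyMeasurable.add hEm) hkey
  have hY'le : ∀ᵐ ω ∂P, Y' ω ≤ Y ω + (P[D | ℱ u]) ω :=
    hY'.2.2 _ (hY.1.aestronglyMeasurable.add hEm) hkey'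
  filter_upwards [hYle, hY'le] with ω a b
  rw [abs_sub_le_iff]
  constructor <;> linarith
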